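/- Asymptotics of the Lagrange multiplier: min_{cl D} q < μ^λ ≤ min_{cl D} q + Cλ^{1/2} for all small λ > 0, given the identity E(ω^λ) = -(1/2)∫ Gω^λ ω^λ + ∫(Gω^λ + q - μ^λ)ω^λ + λμ^λ, the bounds ‖Gω^λ‖_∞ ≤ Cλ^{1/2}, ∫(Gω^λ + q - μ^λ)ω^λ ≥ -Cλ^{3/2}, E(ω^λ) ≤ λ min q + Cλ^{3/2}, Gω^λ ≥ 0, and nonemptiness of Ω^λ. -/

import Mathlib

open Set MeasureTheory

/-- Asymptotics of the Lagrange multiplier: under the energy identity and the listed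
estimates, min q < μ^λ ≤ min q + C'λ^{1/2}, and consequently
sup_{x ∈ Ω^λ}(q(x) - min q) ≤ C'λ^{1/2}. -/
theorem multiplier_asymptotics
    (D : Set (ℝ × ℝ)) (hD : MeasurableSet D) (hDb : Bornology.IsBounded D)
    (q : ℝ × ℝ → ℝ) (m κ : ℝ) (hκ : 0 < κ)
    (hqm : ∀ x ∈ closure D, m ≤ q x)
    (lam₀ : ℝ) (hlam₀ : 0 < lam₀)
    (ω : ℝ → ℝ × ℝ → ℝ) (Gω : ℝ → ℝ × ℝ → ℝ) (Ω : ℝ → Set (ℝ × ℝ))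
    (μ : ℝ → ℝ) (En : ℝ → ℝ)
    (C : ℝ) (hC : 0 < C)
    (hΩ : ∀ lam ∈ Set.Ioo 0 lam₀, Ω lam = {x ∈ D | Gω lam x + q x < μ lam})
    (hne : ∀ lam ∈ Set.Ioo 0 lam₀, (Ω lam).Nonempty)
    (hGpos : ∀ lam ∈ Set.Ioo 0 lam₀, ∀ x ∈ D, 0 ≤ Gω lam x)
    (hGbd : ∀ lam ∈ Set.Ioo 0 lam₀, ∀ x ∈ D, |Gω lam x| ≤ C * Real.sqrt lam)
    (hωbd : ∀ lam ∈ Set.Ioo 0 lam₀, ∀ x, 0 ≤ ω lam x ∧ ω lam x ≤ κ)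
    (hωmeas : ∀ lam ∈ Set.Ioo 0 lam₀,
      AEStronglyMeasurable (ω lam) (volume.restrict D))
    (hωint : ∀ lam ∈ Set.Ioo 0 lam₀, ∫ x in D, ω lam x = lam)
    (hid : ∀ lam ∈ Set.Ioo 0 lam₀, En lam =
      -(1/2) * (∫ x in D, Gω lam x * ω lam x)
      + (∫ x in D, (Gω lam x + q x - μ lam) * ω lam x) + lam * μ lam)
    (hlow : ∀ lam ∈ Set.Ioo 0 lam₀,
      -C * lam ^ ((3:ℝ)/2) ≤ ∫ x in D, (Gω lam x + q x - μ lam) * ω lam x)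
    (hup : ∀ lam ∈ Set.Ioo 0 lam₀, En lam ≤ lam * m + C * lam ^ ((3:ℝ)/2)) :
    ∃ C' > 0, ∀ lam ∈ Set.Ioo 0 lam₀,
      m < μ lam ∧ μ lam ≤ m + C' * Real.sqrt lam ∧
      ∀ x ∈ Ω lam, q x - m ≤ C' * Real.sqrt lam := by

  refine ⟨3 * C, by linarith, fun lam hlam => ?_⟩
  obtain ⟨hl0, hll⟩ := hlam
  have hlam : lam ∈ Set.Ioo 0 lam₀ := ⟨hl0, hll⟩
  have hsq : 0 < Real.sqrt lam := Real.sqrt_pos.mpr hl0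
  have hfin : IsFiniteMeasure (volume.restrict D) :=
    ⟨by rw [Measure.restrict_apply_univ]; exact hDb.measure_lt_top⟩
  have hωi : IntegrableOn (ω lam) D := by
    refine (memLp_top_of_bound (hωmeas lam hlam) κ
      (Filter.Eventually.of_forall fun x => ?_)).integrable le_top
    rcases hωbd lam hlam x with ⟨h1, h2⟩
    rw [Real.norm_eq_abs, abs_of_nonneg h1]; exact h2
  have hI : ∫ x in D, Gω lam x * ω lam x ≤ C * Real.sqrt lam * lam := by
    have hmono : ∫ x in D, Gω lam x * ω lam x
        ≤ ∫ x in D, C * Real.sqrt lam * ω lam x := by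
      apply integral_mono_of_nonneg
      · filter_upwards [ae_restrict_mem hD] with x hx
        exact mul_nonneg (hGpos lam hlam x hx) (hωbd lam hlam x).1
      · exact hωi.const_mul _
      · filter_upwards [ae_restrict_mem hD] with x hx
        exact mul_le_mul_of_nonneg_right
          (le_trans (le_abs_self _) (hGbd lam hlam x hx)) (hωbd lam hlam x).1
    rwa [integral_const_mul, hωint lam hlam] at hmono
  have hrp : lam ^ ((3:ℝ)/2) = lam * Real.sqrt lam := by
    have : ((3:ℝ)/2) = 1 + 1/2 := by norm_num
    rw [this, Real.rpow_add hl0, Real.rpow_one, Real.sqrt_eq_rpow]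
  have hmu : μ lam ≤ m + 3 * C * Real.sqrt lam := by
    have h1 := hid lam hlam
    have h2 := hlow lam hlam
    have h3 := hup lam hlam
    rw [hrp] at h2 h3
    have key : lam * μ lam ≤ lam * (m + 3 * C * Real.sqrt lam) := by nlinarith [mul_pos (mul_pos hC hl0) hsq]
    exact le_of_mul_le_mul_left key hl0
  have hlower : m < μ lam := by
    obtain ⟨x, hx⟩ := hne lam hlam
    rw [hΩ lam hlam] at hx
    obtain ⟨hxD, hxlt⟩ := hx
    have := hqm x (subset_closure hxD)
    have := hGpos lam hlam x hxD
    linarith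
  refine ⟨hlower, hmu, fun x hx => ?_⟩
  rw [hΩ lam hlam] at hx
  obtain ⟨hxD, hxlt⟩ := hx
  have := hGpos lam hlam x hxD
  linarith
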